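/- Fix constants 0 < α < b, J₁, 𝔪 ∈ N and δ₃ ∈ (0,1), and set J₂ := J₁ + ⌈δ₃^{−2}⌉. There exists c > 0 depending only on α and b such that for all sufficiently large n (depending on J₁, 𝔪, δ₃), for every function PT as in the hypotheses, every z ∈ Box(n) and every unit direction θ, the following holds. Define U_j := Σ_{i=0}^{2^{j𝔪}−1} PT(z + i·(n/2^{j𝔪})·θ, z + (i+1)·(n/2^{j𝔪})·θ) for J₁ ≤ j ≤ J₂. Then (U_j) is nondecreasing in j, and there exists a set I of at least c/δ₃ consecutive integers contained in [J₁, J₂] such that 0 ≤ U_{j+1}/U_j − 1 ≤ δ₃ for every j with j, j+1 ∈ I. -/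

import Mathlib

noncomputable section

/-- Euclidean norm on `ℝ²`. -/
def norm2 (p : ℝ × ℝ) : ℝ := Real.sqrt (p.1 ^ 2 + p.2 ^ 2)

/-- The box `[-r, r]² ⊆ ℝ²`. -/
def Box (r : ℝ) : Set (ℝ × ℝ) := {p | |p.1| ≤ r ∧ |p.2| ≤ r}

/-- The lattice box `[-r, r]² ∩ ℤ²`. -/
def LBox (r : ℝ) : Set (ℤ × ℤ) := {z | |(z.1 : ℝ)| ≤ r ∧ |(z.2 : ℝ)| ≤ r}

/-- The unit vector at angle `a`. -/
def dir (a : ℝ) : ℝ × ℝ := (Real.cos a, Real.sin a)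

/-- `z` is `(δ, θ, ℓ, k)`-stable for the distance function `D`: for every integer
`1 ≤ k' ≤ k`, `k'·D(z, z+ℓθ)/(1+δ) ≤ D(z, z+k'ℓθ) ≤ (1+δ)·k'·D(z, z+ℓθ)`. -/
def StablePt (D : ℝ × ℝ → ℝ × ℝ → ℝ) (δ : ℝ) (θ : ℝ × ℝ) (ℓ : ℝ) (k : ℝ)
    (z : ℝ × ℝ) : Prop :=
  ∀ k' : ℕ, 1 ≤ k' → (k' : ℝ) ≤ k →
    (k' : ℝ) * D z (z + ℓ • θ) / (1 + δ) ≤ D z (z + ((k' : ℝ) * ℓ) • θ) ∧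
      D z (z + ((k' : ℝ) * ℓ) • θ) ≤ (1 + δ) * (k' : ℝ) * D z (z + ℓ • θ)

/-- `z` is `(δ, S¹(η), ℓ, k)`-stable: it is `(δ, θ, ℓ, k)`-stable for every direction
`θ` in the discretized circle `S¹(η) = {0, η, 2η, …, 2π − η}`. -/
def StableDirs (D : ℝ × ℝ → ℝ × ℝ → ℝ) (δ η ℓ k : ℝ) (z : ℝ × ℝ) : Prop :=
  ∀ i : ℕ, (i : ℝ) * η ≤ 2 * Real.pi - η → StablePt D δ (dir ((i : ℝ) * η)) ℓ k z

/-- The gradient function `grad(z, θ, ℓ) = D(z, z + ℓθ)/ℓ`. -/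
def grad (D : ℝ × ℝ → ℝ × ℝ → ℝ) (z : ℝ × ℝ) (θ : ℝ × ℝ) (ℓ : ℝ) : ℝ :=
  D z (z + ℓ • θ) / ℓ

/-- `D : ℝ² × ℝ² → [0,∞)` satisfies the triangle inequality and the two-sided bound
`α|x−y| ≤ D(x,y) ≤ 3b|x−y|` for all `x, y ∈ Box(R)` with `|x−y| ≥ rt`. -/
def GoodPT' (α b R rt : ℝ) (D : ℝ × ℝ → ℝ × ℝ → ℝ) : Prop :=
  (∀ x y, 0 ≤ D x y) ∧
  (∀ x y z, D x z ≤ D x y + D y z) ∧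
  (∀ x y, x ∈ Box R → y ∈ Box R → rt ≤ norm2 (x - y) →
    α * norm2 (x - y) ≤ D x y ∧ D x y ≤ 3 * b * norm2 (x - y))

/-- `U_j := Σ_{i=0}^{2^{j𝔪}−1} D(z + i·(n/2^{j𝔪})·θ, z + (i+1)·(n/2^{j𝔪})·θ)`. -/
def Usum (D : ℝ × ℝ → ℝ × ℝ → ℝ) (z θ : ℝ × ℝ) (n 𝔪 j : ℕ) : ℝ :=
  ∑ i ∈ Finset.range (2 ^ (j * 𝔪)),
    D (z + ((i : ℝ) * ((n : ℝ) / 2 ^ (j * 𝔪))) • θ)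
      (z + (((i : ℝ) + 1) * ((n : ℝ) / 2 ^ (j * 𝔪))) • θ)

lemma my_norm2_smul (c : ℝ) (θ : ℝ × ℝ) : norm2 (c • θ) = |c| * norm2 θ := by
  unfold norm2
  simp only [Prod.smul_fst, Prod.smul_snd, smul_eq_mul]
  rw [mul_pow, mul_pow, ← mul_add, Real.sqrt_mul (sq_nonneg c), Real.sqrt_sq_eq_abs]

lemma my_sub_smul (z θ : ℝ × ℝ) (s t : ℝ) :
    (z + s • θ) - (z + t • θ) = (s - t) • θ := by
  ext <;> simp [Prod.smul_fst, Prod.smul_snd] <;> ring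

lemma my_sum_range_mul {M : Type*} [AddCommMonoid M] (f : ℕ → M) (A B : ℕ) :
    ∑ i ∈ Finset.range (A * B), f i
      = ∑ q ∈ Finset.range A, ∑ r ∈ Finset.range B, f (q * B + r) := by
  induction A with
  | zero => simp
  | succ A ih =>
    rw [Finset.sum_range_succ, ← ih, Nat.succ_mul, Finset.sum_range_add]

lemma my_chain (D : ℝ × ℝ → ℝ × ℝ → ℝ) (hD : ∀ x y z, D x z ≤ D x y + D y z)
    (f : ℕ → ℝ × ℝ) : ∀ K : ℕ, 1 ≤ K →
    D (f 0) (f K) ≤ ∑ i ∈ Finset.range K, D (f i) (f (i + 1)) := by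
  intro K
  induction K with
  | zero => omega
  | succ K ih =>
    intro _
    rcases Nat.eq_zero_or_pos K with h | h
    · subst h; simp
    · rw [Finset.sum_range_succ]
      exact le_trans (hD _ (f K) _) (add_le_add_left (ih h) _)

lemma my_Usum_mono (D : ℝ × ℝ → ℝ × ℝ → ℝ) (hD : ∀ x y z, D x z ≤ D x y + D y z)
    (z θ : ℝ × ℝ) (n 𝔪 j : ℕ) :
    Usum D z θ n 𝔪 j ≤ Usum D z θ n 𝔪 (j + 1) := by
  unfold Usum
  have hpow : (j + 1) * 𝔪 = j * 𝔪 + 𝔪 := by ring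
  have h2 : (2 : ℕ) ^ ((j + 1) * 𝔪) = 2 ^ (j * 𝔪) * 2 ^ 𝔪 := by
    rw [hpow, pow_add]
  rw [h2]
  rw [my_sum_range_mul (fun i => D (z + ((i : ℝ) * ((n : ℝ) / 2 ^ ((j+1) * 𝔪))) • θ)
      (z + (((i : ℝ) + 1) * ((n : ℝ) / 2 ^ ((j+1) * 𝔪))) • θ)) (2 ^ (j * 𝔪)) (2 ^ 𝔪)]
  apply Finset.sum_le_sum
  intro q _
  have key : ∀ r : ℕ, ((q * 2 ^ 𝔪 + r : ℕ) : ℝ) * ((n : ℝ) / 2 ^ ((j+1) * 𝔪))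
      = (q : ℝ) * ((n : ℝ) / 2 ^ (j * 𝔪)) + (r : ℝ) * ((n : ℝ) / 2 ^ ((j+1) * 𝔪)) := by
    intro r
    have e1 : ((2:ℝ)) ^ ((j+1) * 𝔪) = 2 ^ (j * 𝔪) * 2 ^ 𝔪 := by rw [hpow, pow_add]
    push_cast
    rw [e1]
    have h1 : ((2:ℝ)) ^ (j * 𝔪) ≠ 0 := by positivity
    have h2' : ((2:ℝ)) ^ 𝔪 ≠ 0 := by positivity
    field_simp
  have := my_chain D hD
      (fun r => z + (((q * 2 ^ 𝔪 + r : ℕ) : ℝ) * ((n : ℝ) / 2 ^ ((j+1) * 𝔪))) • θ)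
      (2 ^ 𝔪) (Nat.one_le_two_pow)
  calc D (z + ((q:ℝ) * ((n : ℝ) / 2 ^ (j * 𝔪))) • θ)
        (z + (((q:ℝ) + 1) * ((n : ℝ) / 2 ^ (j * 𝔪))) • θ)
      = D (z + (((q * 2 ^ 𝔪 + 0 : ℕ) : ℝ) * ((n : ℝ) / 2 ^ ((j+1) * 𝔪))) • θ)
        (z + (((q * 2 ^ 𝔪 + 2 ^ 𝔪 : ℕ) : ℝ) * ((n : ℝ) / 2 ^ ((j+1) * 𝔪))) • θ) := by
        rw [key 0, key (2 ^ 𝔪)]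
        have e1 : ((2:ℝ)) ^ ((j+1) * 𝔪) = 2 ^ (j * 𝔪) * 2 ^ 𝔪 := by rw [hpow, pow_add]
        have ea : ((0:ℕ):ℝ) * ((n:ℝ) / 2 ^ ((j+1) * 𝔪)) = 0 := by simp
        have eb : (q:ℝ) * ((n:ℝ)/2^(j*𝔪)) + ((2^𝔪:ℕ):ℝ) * ((n:ℝ) / 2 ^ ((j+1) * 𝔪))
            = ((q:ℝ)+1) * ((n:ℝ)/2^(j*𝔪)) := by
          push_cast
          rw [e1]
          have h1 : ((2:ℝ)) ^ (j * 𝔪) ≠ 0 := by positivity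
          have h2' : ((2:ℝ)) ^ 𝔪 ≠ 0 := by positivity
          field_simp
        rw [ea, add_zero, eb]
    _ ≤ ∑ r ∈ Finset.range (2 ^ 𝔪),
        D (z + (((q * 2 ^ 𝔪 + r : ℕ) : ℝ) * ((n : ℝ) / 2 ^ ((j+1) * 𝔪))) • θ)
          (z + (((q * 2 ^ 𝔪 + (r+1) : ℕ) : ℝ) * ((n : ℝ) / 2 ^ ((j+1) * 𝔪))) • θ) := by
        exact this
    _ = ∑ r ∈ Finset.range (2 ^ 𝔪),
        D (z + (((q * 2 ^ 𝔪 + r : ℕ) : ℝ) * ((n : ℝ) / 2 ^ ((j+1) * 𝔪))) • θ)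
          (z + ((((q * 2 ^ 𝔪 + r : ℕ) : ℝ) + 1) * ((n : ℝ) / 2 ^ ((j+1) * 𝔪))) • θ) := by
        apply Finset.sum_congr rfl
        intro r _
        congr 3
        push_cast
        ring

lemma my_unit_bounds (θ : ℝ × ℝ) (hθ : norm2 θ = 1) : |θ.1| ≤ 1 ∧ |θ.2| ≤ 1 := by
  have h : θ.1 ^ 2 + θ.2 ^ 2 = 1 := Real.sqrt_eq_one.mp hθ
  constructor <;> rw [abs_le] <;> constructor <;> nlinarith [sq_nonneg θ.1, sq_nonneg θ.2]

lemma my_mem_box (n : ℕ) (z : ℝ × ℝ) (hz : z ∈ Box n) (θ : ℝ × ℝ) (hθ : norm2 θ = 1)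
    (t : ℝ) (ht0 : 0 ≤ t) (ht : t ≤ n) : z + t • θ ∈ Box (10 * n) := by
  obtain ⟨h1, h2⟩ := my_unit_bounds θ hθ
  obtain ⟨hz1, hz2⟩ := hz
  have hz1' := abs_le.mp hz1
  have hz2' := abs_le.mp hz2
  have h1' := abs_le.mp h1
  have h2' := abs_le.mp h2
  constructor <;> simp only [Prod.fst_add, Prod.snd_add, Prod.smul_fst, Prod.smul_snd,
    smul_eq_mul] <;> rw [abs_le] <;> constructor <;> nlinarith

lemma my_Usum_bounds (α b : ℝ) (hα : 0 < α) (hb : 0 < b) (n : ℕ) (hn1 : 1 ≤ n)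
    (D : ℝ × ℝ → ℝ × ℝ → ℝ) (hD : GoodPT' α b (10 * n) (Real.sqrt n) D)
    (z : ℝ × ℝ) (hz : z ∈ Box n) (θ : ℝ × ℝ) (hθ : norm2 θ = 1) (𝔪 j : ℕ)
    (hscale : Real.sqrt n ≤ (n : ℝ) / 2 ^ (j * 𝔪)) :
    α * n ≤ Usum D z θ n 𝔪 j ∧ Usum D z θ n 𝔪 j ≤ 3 * b * n := by
  unfold Usum
  set P : ℕ := 2 ^ (j * 𝔪) with hP
  set ℓ : ℝ := (n : ℝ) / 2 ^ (j * 𝔪) with hℓ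
  have hPne : ((P : ℝ)) ≠ 0 := by positivity
  have hPcast : ((2 : ℝ)) ^ (j * 𝔪) = (P : ℝ) := by push_cast [hP]; ring
  have hℓpos : 0 < ℓ := by
    rw [hℓ]
    apply div_pos (by exact_mod_cast hn1) (by positivity)
  have hPl : (P : ℝ) * ℓ = n := by rw [hℓ, hPcast]; field_simp
  clear_value P ℓ
  have hterm : ∀ i ∈ Finset.range P,
      α * ℓ ≤ D (z + ((i : ℝ) * ℓ) • θ) (z + (((i : ℝ) + 1) * ℓ) • θ) ∧
      D (z + ((i : ℝ) * ℓ) • θ) (z + (((i : ℝ) + 1) * ℓ) • θ) ≤ 3 * b * ℓ := by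
    intro i hi
    have hi' : (i : ℝ) + 1 ≤ P := by
      have := Finset.mem_range.mp hi
      exact_mod_cast Nat.succ_le_of_lt this
    have hx : z + ((i : ℝ) * ℓ) • θ ∈ Box (10 * n) := by
      apply my_mem_box n z hz θ hθ _ (by positivity)
      calc (i : ℝ) * ℓ ≤ (P : ℝ) * ℓ := by
            apply mul_le_mul_of_nonneg_right _ hℓpos.le
            linarith
        _ = n := hPl
    have hy : z + (((i : ℝ) + 1) * ℓ) • θ ∈ Box (10 * n) := by
      apply my_mem_box n z hz θ hθ _ (by positivity)
      calc ((i : ℝ) + 1) * ℓ ≤ (P : ℝ) * ℓ := mul_le_mul_of_nonneg_right hi' hℓpos.le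
        _ = n := hPl
    have hdiff : norm2 ((z + ((i : ℝ) * ℓ) • θ) - (z + (((i : ℝ) + 1) * ℓ) • θ)) = ℓ := by
      rw [my_sub_smul, my_norm2_smul, hθ, mul_one]
      rw [show (i : ℝ) * ℓ - ((i : ℝ) + 1) * ℓ = -ℓ by ring, abs_neg, abs_of_pos hℓpos]
    have hrt : Real.sqrt n ≤ norm2 ((z + ((i : ℝ) * ℓ) • θ) - (z + (((i : ℝ) + 1) * ℓ) • θ)) := by
      rw [hdiff]; exact hscale
    have := hD.2.2 _ _ hx hy hrt
    rw [hdiff] at this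
    exact this
  constructor
  · calc α * (n : ℝ) = (P : ℝ) * (α * ℓ) := by rw [← hPl, ← hPcast]; ring
      _ = ∑ _i ∈ Finset.range P, α * ℓ := by rw [Finset.sum_const, Finset.card_range]; ring
      _ ≤ _ := Finset.sum_le_sum (fun i hi => (hterm i hi).1)
  · calc _ ≤ ∑ _i ∈ Finset.range P, 3 * b * ℓ :=
        Finset.sum_le_sum (fun i hi => (hterm i hi).2)
      _ = (P : ℝ) * (3 * b * ℓ) := by rw [Finset.sum_const, Finset.card_range]; ring
      _ = 3 * b * n := by rw [← hPl, ← hPcast]; ring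

set_option maxHeartbeats 1600000 in
/-- consecutive flat scales. With `J₂ := J₁ + ⌈δ₃^{−2}⌉`, there is
`c = c(α,b) > 0` such that for all large `n`, every admissible `D`, every `z ∈ Box(n)`
and unit `θ`: `(U_j)` is nondecreasing on `[J₁, J₂]`, and there is a set `I` of at
least `c/δ₃` consecutive integers contained in `[J₁, J₂]` with
`0 ≤ U_{j+1}/U_j − 1 ≤ δ₃` for every `j` with `j, j+1 ∈ I`. -/
theorem consecutive_flat_scales
    (α b : ℝ) (hα : 0 < α) (hab : α < b) :
    ∃ c : ℝ, 0 < c ∧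
    ∀ (J₁ 𝔪 : ℕ) (δ₃ : ℝ), 1 ≤ 𝔪 → 0 < δ₃ → δ₃ < 1 →
    ∃ N : ℕ, ∀ n : ℕ, N ≤ n →
    ∀ D : ℝ × ℝ → ℝ × ℝ → ℝ, GoodPT' α b (10 * n) (Real.sqrt n) D →
    ∀ z ∈ Box (n : ℝ), ∀ θ : ℝ × ℝ, norm2 θ = 1 →
      (∀ j : ℕ, J₁ ≤ j → j < J₁ + ⌈1 / δ₃ ^ 2⌉₊ →
        Usum D z θ n 𝔪 j ≤ Usum D z θ n 𝔪 (j + 1)) ∧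
      (∃ a len : ℕ, J₁ ≤ a ∧ a + len ≤ J₁ + ⌈1 / δ₃ ^ 2⌉₊ ∧
        c / δ₃ ≤ (len : ℝ) + 1 ∧
        ∀ j : ℕ, a ≤ j → j + 1 ≤ a + len →
          0 ≤ Usum D z θ n 𝔪 (j + 1) / Usum D z θ n 𝔪 j - 1 ∧
            Usum D z θ n 𝔪 (j + 1) / Usum D z θ n 𝔪 j - 1 ≤ δ₃) := by
  have hb : 0 < b := lt_trans hα hab
  refine ⟨α / (3 * b), by positivity, ?_⟩
  intro J₁ 𝔪 δ₃ h𝔪 hδ0 hδ1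
  classical
  set M : ℕ := ⌈1 / δ₃ ^ 2⌉₊ with hMdef
  have hM1 : 1 ≤ M := Nat.ceil_pos.mpr (by positivity)
  have hMr : (1 : ℝ) / δ₃ ^ 2 ≤ (M : ℝ) := by rw [hMdef]; exact Nat.le_ceil _
  clear_value M
  refine ⟨4 ^ ((J₁ + M) * 𝔪), ?_⟩
  intro n hn D hD z hz θ hθ
  set U : ℕ → ℝ := Usum D z θ n 𝔪 with hU
  have hn1 : 1 ≤ n := le_trans (Nat.one_le_pow _ _ (by norm_num)) hn
  have hn0 : (0 : ℝ) < n := by exact_mod_cast hn1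
  -- scale condition
  have hscale : ∀ j : ℕ, j ≤ J₁ + M → Real.sqrt n ≤ (n : ℝ) / 2 ^ (j * 𝔪) := by
    intro j hj
    have hE : ((2 : ℝ)) ^ ((J₁ + M) * 𝔪) ≤ Real.sqrt n := by
      have h4 : (((2:ℝ)) ^ ((J₁ + M) * 𝔪)) ^ 2 = 4 ^ ((J₁ + M) * 𝔪) := by
        rw [← pow_mul, mul_comm ((J₁ + M) * 𝔪) 2, pow_mul]; norm_num
      rw [show ((2:ℝ)) ^ ((J₁ + M) * 𝔪)
          = Real.sqrt ((((2:ℝ)) ^ ((J₁ + M) * 𝔪)) ^ 2) from (Real.sqrt_sq (by positivity)).symm]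
      apply Real.sqrt_le_sqrt
      rw [h4]
      exact_mod_cast hn
    have hple : ((2 : ℝ)) ^ (j * 𝔪) ≤ 2 ^ ((J₁ + M) * 𝔪) := by
      apply pow_le_pow_right₀ (by norm_num)
      exact Nat.mul_le_mul_right _ hj
    rw [le_div_iff₀ (by positivity)]
    calc Real.sqrt n * 2 ^ (j * 𝔪) ≤ Real.sqrt n * Real.sqrt n := by
          apply mul_le_mul_of_nonneg_left (le_trans hple hE) (Real.sqrt_nonneg _)
      _ = n := Real.mul_self_sqrt (by positivity)
  have hmono : ∀ j, U j ≤ U (j + 1) := fun j => my_Usum_mono D hD.2.1 z θ n 𝔪 j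
  have hbdd : ∀ j, j ≤ J₁ + M → α * n ≤ U j ∧ U j ≤ 3 * b * n := fun j hj =>
    my_Usum_bounds α b hα hb n hn1 D hD z hz θ hθ 𝔪 j (hscale j hj)
  clear_value U
  refine ⟨fun j _ _ => hmono j, ?_⟩
  -- bad set
  set Bad : Finset ℕ := (Finset.Ico J₁ (J₁ + M)).filter (fun j => (1 + δ₃) * U j < U (j + 1))
    with hBad
  set B : ℕ := Bad.card with hBcard
  set g : ℕ → ℕ := fun j => (Finset.range j ∩ Bad).card with hg
  have hBadIff : ∀ j, j ∈ Bad ↔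
      j ∈ Finset.Ico J₁ (J₁ + M) ∧ (1 + δ₃) * U j < U (j + 1) := fun j => Finset.mem_filter
  have hgle : ∀ j, g j ≤ B := fun j => Finset.card_le_card Finset.inter_subset_right
  have hgmono : ∀ {j j' : ℕ}, j ≤ j' → g j ≤ g j' := fun h =>
    Finset.card_le_card (Finset.inter_subset_inter (Finset.range_subset_range.2 h) (Finset.Subset.refl _))
  have hgstep_mem : ∀ j, j ∈ Bad → g (j + 1) = g j + 1 := by
    intro j hj
    show (Finset.range (j + 1) ∩ Bad).card = (Finset.range j ∩ Bad).card + 1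
    rw [Finset.range_add_one, Finset.insert_inter_of_mem hj, Finset.card_insert_of_notMem]
    intro hmem
    exact absurd (Finset.mem_inter.mp hmem).1 (by simp)
  have hgstep_not : ∀ j, j ∉ Bad → g (j + 1) = g j := by
    intro j hj
    show (Finset.range (j + 1) ∩ Bad).card = (Finset.range j ∩ Bad).card
    rw [Finset.range_add_one, Finset.insert_inter_of_notMem hj]
  have hg0 : g J₁ = 0 := by
    show (Finset.range J₁ ∩ Bad).card = 0
    rw [Finset.card_eq_zero, Finset.eq_empty_iff_forall_notMem]
    intro x hx
    obtain ⟨hx1, hx2⟩ := Finset.mem_inter.mp hx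
    have h1 := Finset.mem_range.mp hx1
    have h2 := (Finset.mem_Ico.mp (Finset.mem_filter.mp hx2).1).1
    omega
  have hgM : g (J₁ + M) = B := by
    show (Finset.range (J₁ + M) ∩ Bad).card = Bad.card
    congr 1
    apply Finset.inter_eq_right.2
    intro x hx
    exact Finset.mem_range.2 (Finset.mem_Ico.mp (Finset.mem_filter.mp hx).1).2
  -- growth
  have hgrow : ∀ t : ℕ, (1 + δ₃) ^ (g (J₁ + t)) * U J₁ ≤ U (J₁ + t) := by
    intro t
    induction t with
    | zero => simp [hg0]
    | succ t ih =>
      have heq : J₁ + (t + 1) = (J₁ + t) + 1 := by ring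
      by_cases hBm : (J₁ + t) ∈ Bad
      · rw [heq, hgstep_mem _ hBm, pow_succ]
        have h2 : (1 + δ₃) * U (J₁ + t) ≤ U ((J₁ + t) + 1) :=
          le_of_lt (Finset.mem_filter.mp hBm).2
        calc (1 + δ₃) ^ (g (J₁ + t)) * (1 + δ₃) * U J₁
            = (1 + δ₃) * ((1 + δ₃) ^ (g (J₁ + t)) * U J₁) := by ring
          _ ≤ (1 + δ₃) * U (J₁ + t) := mul_le_mul_of_nonneg_left ih (by linarith)
          _ ≤ U ((J₁ + t) + 1) := h2
      · rw [heq, hgstep_not _ hBm]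
        exact le_trans ih (hmono _)
  -- key bound on B
  have hkey : (1 + δ₃) ^ B * (α * n) ≤ 3 * b * n := by
    calc (1 + δ₃) ^ B * (α * n) ≤ (1 + δ₃) ^ (g (J₁ + M)) * U J₁ := by
          rw [hgM]
          exact mul_le_mul_of_nonneg_left (hbdd J₁ (by omega)).1 (by positivity)
      _ ≤ U (J₁ + M) := hgrow M
      _ ≤ 3 * b * n := (hbdd (J₁ + M) le_rfl).2
  have hBern : 1 + (B : ℝ) * δ₃ ≤ (1 + δ₃) ^ B := one_add_mul_le_pow (by linarith) B
  have hkey2 : (1 + (B : ℝ) * δ₃) * (α * n) ≤ 3 * b * n :=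
    le_trans (mul_le_mul_of_nonneg_right hBern (by positivity)) hkey
  have hB1' : ((B : ℝ) + 1) * (α * δ₃) ≤ 3 * b := by
    have hBn : (B : ℝ) * δ₃ * α ≤ 3 * b - α := by
      have h' : ((B : ℝ) * δ₃ * α) * n ≤ (3 * b - α) * n := by nlinarith [hkey2]
      exact le_of_mul_le_mul_right h' hn0
    nlinarith [hBn, mul_pos hα hδ0]
  -- pigeonhole
  clear_value g B Bad
  set n₀ : ℕ := (M - 1) / (B + 1) with hn₀
  have hmaps : ∀ j ∈ Finset.Ico J₁ (J₁ + M), g j ∈ Finset.range (B + 1) := by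
    intro j _
    exact Finset.mem_range.2 (Nat.lt_succ_of_le (hgle j))
  have hcard : (Finset.range (B + 1)).card * n₀ < (Finset.Ico J₁ (J₁ + M)).card := by
    rw [Finset.card_range, Nat.card_Ico]
    calc (B + 1) * n₀ = n₀ * (B + 1) := Nat.mul_comm _ _
      _ ≤ M - 1 := Nat.div_mul_le_self _ _
      _ < J₁ + M - J₁ := by omega
  obtain ⟨v, _, hfib⟩ := Finset.exists_lt_card_fiber_of_mul_lt_card_of_maps_to hmaps hcard
  set F : Finset ℕ := (Finset.Ico J₁ (J₁ + M)).filter (fun j => g j = v) with hF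
  have hFne : F.Nonempty := Finset.card_pos.mp (lt_of_le_of_lt (Nat.zero_le _) hfib)
  set a : ℕ := F.min' hFne with ha
  set amax : ℕ := F.max' hFne with hamax
  have haF : a ∈ F := F.min'_mem hFne
  have hamaxF : amax ∈ F := F.max'_mem hFne
  have haIco := Finset.mem_Ico.mp (Finset.mem_filter.mp haF).1
  have hamaxIco := Finset.mem_Ico.mp (Finset.mem_filter.mp hamaxF).1
  have hga : g a = v := (Finset.mem_filter.mp haF).2
  have hgamax : g amax = v := (Finset.mem_filter.mp hamaxF).2
  have halemax : a ≤ amax := F.min'_le _ hamaxF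
  set len : ℕ := amax - a with hlen
  have haddlen : a + len = amax := by omega
  have hFcard : F.card ≤ len + 1 := by
    calc F.card ≤ (Finset.Icc a amax).card := by
          apply Finset.card_le_card
          intro x hx
          exact Finset.mem_Icc.2 ⟨F.min'_le _ hx, F.le_max' _ hx⟩
      _ = len + 1 := by rw [Nat.card_Icc]; omega
  have hlenn₀ : n₀ + 1 ≤ len + 1 := by omega
  clear_value F a amax len
  have hMn₀ : M ≤ (n₀ + 1) * (B + 1) := by
    have h1 : M - 1 < (n₀ + 1) * (B + 1) :=
      (Nat.div_lt_iff_lt_mul (Nat.succ_pos B)).mp (Nat.lt_succ_self n₀)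
    omega
  clear_value n₀
  refine ⟨a, len, haIco.1, by omega, ?_, ?_⟩
  · -- c / δ₃ ≤ len + 1
    have hMX : (M : ℝ) ≤ ((n₀ : ℝ) + 1) * ((B : ℝ) + 1) := by exact_mod_cast hMn₀
    have hXlen : ((n₀ : ℝ) + 1) ≤ (len : ℝ) + 1 := by exact_mod_cast hlenn₀
    have h1 : (1 : ℝ) ≤ (M : ℝ) * δ₃ ^ 2 := by
      rw [div_le_iff₀ (by positivity)] at hMr
      linarith
    have hX1 : (1 : ℝ) ≤ ((n₀ : ℝ) + 1) * ((B : ℝ) + 1) * δ₃ ^ 2 := by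
      nlinarith [sq_nonneg δ₃]
    rw [div_div, div_le_iff₀ (by positivity)]
    -- goal : α ≤ (len + 1) * (3 * b * δ₃)
    have hXpos : (0 : ℝ) < (n₀ : ℝ) + 1 := by positivity
    have h5 : α ≤ ((n₀ : ℝ) + 1) * (3 * b * δ₃) := by
      nlinarith [mul_le_mul_of_nonneg_left hB1' (le_of_lt (mul_pos hXpos hδ0)),
        mul_le_mul_of_nonneg_left hX1 hα.le, mul_pos hXpos hδ0]
    calc α ≤ ((n₀ : ℝ) + 1) * (3 * b * δ₃) := h5
      _ ≤ ((len : ℝ) + 1) * (3 * b * δ₃) := by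
          apply mul_le_mul_of_nonneg_right hXlen (by positivity)
  · intro j hja hjlen
    have hjamax : j + 1 ≤ amax := by omega
    have hgj : g j = v := by
      have h1 : v ≤ g j := hga ▸ hgmono hja
      have h2 : g (j + 1) ≤ v := hgamax ▸ hgmono hjamax
      have h3 : g j ≤ g (j + 1) := hgmono (Nat.le_succ j)
      omega
    have hgj1 : g (j + 1) = v := by
      have h1 : v ≤ g j := hga ▸ hgmono hja
      have h2 : g (j + 1) ≤ v := hgamax ▸ hgmono hjamax
      have h3 : g j ≤ g (j + 1) := hgmono (Nat.le_succ j)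
      omega
    have hjnotbad : j ∉ Bad := by
      intro hmem
      have := hgstep_mem j hmem
      omega
    have hjIco : j ∈ Finset.Ico J₁ (J₁ + M) := Finset.mem_Ico.2 (by omega)
    have hle : U (j + 1) ≤ (1 + δ₃) * U j := by
      by_contra hcon
      exact hjnotbad ((hBadIff j).2 ⟨hjIco, by linarith⟩)
    have hujpos : 0 < U j := lt_of_lt_of_le (by positivity) (hbdd j (by omega)).1
    constructor
    · rw [sub_nonneg, le_div_iff₀ hujpos, one_mul]
      exact hmono j
    · rw [sub_le_iff_le_add, div_le_iff₀ hujpos]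
      linarith
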